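/- Extend γ to the two ghosts by γ(∂ℓ) := a, γ(∂r) := b, and the Stern–Brocot pairs by pair(∂ℓ) := (0,1), pair(∂r) := (1,0), pair(w) := StBr(w) for a path w. Then for any two elements x, y of the set consisting of all finite Boolean lists together with ∂ℓ and ∂r, the word γ(x) is lexicographically smaller than γ(y) if and only if pair(x) <_Q pair(y). -/

import Mathlib

/-- One step of the Stern–Brocot state-passing recursion: the state is the pair
`(L, R)` of bounds; a `false` step (left child) replaces `R` by `L + R`, a `true`
step (right child) replaces `L` by `L + R`. -/
def sbStep : ((ℕ × ℕ) × (ℕ × ℕ)) → Bool → ((ℕ × ℕ) × (ℕ × ℕ))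
  | (L, R), false => (L, (L.1 + R.1, L.2 + R.2))
  | (L, R), true  => ((L.1 + R.1, L.2 + R.2), R)

/-- The bounds `(L(w), R(w))` of the node of the Stern–Brocot tree addressed by
the path `w`, starting from `((0,1), (1,0))` at the root. -/
def sbBounds (w : List Bool) : (ℕ × ℕ) × (ℕ × ℕ) :=
  w.foldl sbStep ((0, 1), (1, 0))

/-- The left godfather pair `L(w)`. -/
def sbL (w : List Bool) : ℕ × ℕ := (sbBounds w).1

/-- The right godfather pair `R(w)`. -/
def sbR (w : List Bool) : ℕ × ℕ := (sbBounds w).2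

/-- The Stern–Brocot pair `StBr(w) = L(w) + R(w)` (componentwise sum). -/
def stBr (w : List Bool) : ℕ × ℕ :=
  ((sbL w).1 + (sbR w).1, (sbL w).2 + (sbR w).2)

/-- The order `<_Q` on pairs of nonnegative integers:
`(r,s) <_Q (r',s')` iff `r·s' < r'·s`. -/
def ltQ (p q : ℕ × ℕ) : Prop := p.1 * q.2 < q.1 * p.2

/-- The order `≤_Q` on pairs of nonnegative integers:
`(r,s) ≤_Q (r',s')` iff `r·s' ≤ r'·s`. -/
def leQ (p q : ℕ × ℕ) : Prop := p.1 * q.2 ≤ q.1 * p.2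

/-- The weight `|(r,s)| := r + s` of a pair. -/
def wtQ (p : ℕ × ℕ) : ℕ := p.1 + p.2
/-- One step of the word state-passing recursion over the alphabet
`{a, b}` (encoded as `a = false`, `b = true`): the state is the pair `(ℓ, r)`
of word bounds; a `false` step replaces `r` by the concatenation `ℓ ++ r`,
a `true` step replaces `ℓ` by `ℓ ++ r`. -/
def wStep : (List Bool × List Bool) → Bool → (List Bool × List Bool)
  | (l, r), false => (l, l ++ r)
  | (l, r), true  => (l ++ r, r)

/-- The word bounds `(ℓ(w), r(w))` of the path `w`, starting from
`(a, b) = ([false], [true])` at the empty path. -/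
def wBounds (w : List Bool) : List Bool × List Bool :=
  w.foldl wStep ([false], [true])

/-- The left word bound `ℓ(w)`. -/
def lWord (w : List Bool) : List Bool := (wBounds w).1

/-- The right word bound `r(w)`. -/
def rWord (w : List Bool) : List Bool := (wBounds w).2

/-- The word `γ(w) := ℓ(w) ++ r(w)` attached to a path `w`. -/
def gammaWord (w : List Bool) : List Bool := lWord w ++ rWord w

/-- The strict lexicographic order on words over the two-letter alphabet
`{a, b}` with `a = false < b = true`. -/
def WordLt (u v : List Bool) : Prop := List.Lex (· < ·) u v

/-- The set of paths together with the two ghosts: `Sum.inl false = ∂ℓ`,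
`Sum.inl true = ∂r`, `Sum.inr w` a path `w`. -/
abbrev NodeBar := Bool ⊕ List Bool

/-- `γ` extended to the ghosts: `γ(∂ℓ) = a`, `γ(∂r) = b`. -/
def gammaBar : NodeBar → List Bool
  | .inl false => [false]
  | .inl true  => [true]
  | .inr w     => gammaWord w

/-- The Stern–Brocot pair extended to the ghosts:
`pair(∂ℓ) = (0,1)`, `pair(∂r) = (1,0)`. -/
def pairBar : NodeBar → ℕ × ℕ
  | .inl false => (0, 1)
  | .inl true  => (1, 0)
  | .inr w     => stBr w

/-! ### Auxiliary lemmas -/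

section Aux

/-! #### Lexicographic order lemmas -/

lemma wlt_trans {u v w : List Bool} (h1 : WordLt u v) (h2 : WordLt v w) : WordLt u w := by
  have : IsTrans (List Bool) (List.Lex (· < ·)) :=
    ⟨fun _ _ _ h1 h2 => List.lex_trans (fun a b => lt_trans a b) h1 h2⟩
  exact this.trans _ _ _ h1 h2

lemma wlt_asymm {u v : List Bool} (h1 : WordLt u v) (h2 : WordLt v u) : False := by
  have : IsAsymm (List Bool) (List.Lex (· < ·)) := inferInstance
  exact this.asymm _ _ h1 h2

lemma wlt_irrefl (u : List Bool) : ¬ WordLt u u := by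
  have : IsIrrefl (List Bool) (List.Lex (· < ·)) := inferInstance
  exact this.irrefl u

lemma wlt_of_prefix {u v : List Bool} (h : u <+: v) (hl : u.length < v.length) : WordLt u v := by
  obtain ⟨t, rfl⟩ := h
  induction u with
  | nil =>
    cases t with
    | nil => simp at hl
    | cons a t => exact List.Lex.nil
  | cons a u ih => exact List.Lex.cons (ih (by simp at hl ⊢; omega))

lemma wlt_append {u v : List Bool} (s : List Bool) (h : WordLt u v) (hl : v.length ≤ u.length) :
    WordLt (u ++ s) v := by
  induction h with
  | nil => simp at hl
  | @cons a l1 l2 h ih => exact List.Lex.cons (ih (by simpa using hl))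
  | rel h => exact List.Lex.rel h

lemma wlt_append_left {u v : List Bool} (p : List Bool) (h : WordLt u v) :
    WordLt (p ++ u) (p ++ v) := by
  induction p with
  | nil => exact h
  | cons a p ih => exact List.Lex.cons ih

/-! #### Rational-order transitivity lemmas -/

lemma ltQ_of_ltQ_of_leQ {p q r : ℕ × ℕ} (hr : 0 < r.1 + r.2)
    (h1 : ltQ p q) (h2 : leQ q r) : ltQ p r := by
  unfold ltQ leQ at *
  rcases Nat.eq_zero_or_pos r.2 with h0 | h0
  · have hpos : 0 < q.1 * p.2 := lt_of_le_of_lt (Nat.zero_le _) h1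
    have hp2 : 0 < p.2 := by
      rcases Nat.eq_zero_or_pos p.2 with h | h
      · simp [h] at hpos
      · exact h
    have hr1 : 0 < r.1 := by omega
    simpa [h0] using Nat.mul_pos hr1 hp2
  · have hq2 : 0 < q.2 := by
      rcases Nat.eq_zero_or_pos q.2 with h | h
      · have hq1 : 0 < q.1 := by
          have hpos : 0 < q.1 * p.2 := lt_of_le_of_lt (Nat.zero_le _) h1
          rcases Nat.eq_zero_or_pos q.1 with h' | h'
          · simp [h'] at hpos
          · exact h'
        have : q.1 * r.2 ≤ 0 := by simpa [h] using h2
        have := Nat.mul_pos hq1 h0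
        omega
      · exact h
    have key : q.2 * (p.1 * r.2) < q.2 * (r.1 * p.2) := by
      nlinarith [Nat.mul_le_mul_right p.2 h2, Nat.mul_lt_mul_of_pos_right h1 h0]
    exact Nat.lt_of_mul_lt_mul_left key

lemma ltQ_of_leQ_of_ltQ {p q r : ℕ × ℕ} (hp : 0 < p.1 + p.2)
    (h1 : leQ p q) (h2 : ltQ q r) : ltQ p r := by
  have := ltQ_of_ltQ_of_leQ (p := (r.2, r.1)) (q := (q.2, q.1)) (r := (p.2, p.1))
    (by simpa [add_comm] using hp)
  unfold ltQ leQ at *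
  simp only at this
  have := this (by simpa [mul_comm] using h2) (by simpa [mul_comm] using h1)
  simpa [mul_comm] using this

lemma leQ_trans' {p q r : ℕ × ℕ} (hq : 0 < q.1 + q.2)
    (h1 : leQ p q) (h2 : leQ q r) : leQ p r := by
  unfold leQ at *
  rcases Nat.eq_zero_or_pos r.2 with h0 | h0
  · simp [h0]
  · have hq2 : 0 < q.2 := by
      rcases Nat.eq_zero_or_pos q.2 with h | h
      · have hq1 : 0 < q.1 := by omega
        have : q.1 * r.2 ≤ 0 := by simpa [h] using h2
        have := Nat.mul_pos hq1 h0
        omega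
      · exact h
    have key : q.2 * (p.1 * r.2) ≤ q.2 * (r.1 * p.2) := by
      nlinarith [Nat.mul_le_mul_right p.2 h2, Nat.mul_le_mul_right r.2 h1]
    exact Nat.le_of_mul_le_mul_left key hq2

lemma ltQ_asymm {p q : ℕ × ℕ} (h1 : ltQ p q) (h2 : ltQ q p) : False := by
  unfold ltQ at *; omega

lemma leQ_refl (p : ℕ × ℕ) : leQ p p := le_refl _

lemma leQ_of_ltQ {p q : ℕ × ℕ} (h : ltQ p q) : leQ p q := le_of_lt h

/-! #### The Stern–Brocot invariant and subtree lemma -/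

/-- Determinant invariant of a Stern–Brocot state. -/
def InvQ (s : (ℕ × ℕ) × (ℕ × ℕ)) : Prop := s.2.1 * s.1.2 = s.1.1 * s.2.2 + 1

lemma sbStep_false (s : (ℕ × ℕ) × (ℕ × ℕ)) :
    sbStep s false = (s.1, (s.1.1 + s.2.1, s.1.2 + s.2.2)) := rfl

lemma sbStep_true (s : (ℕ × ℕ) × (ℕ × ℕ)) :
    sbStep s true = ((s.1.1 + s.2.1, s.1.2 + s.2.2), s.2) := rfl

lemma invQ_step (s : (ℕ × ℕ) × (ℕ × ℕ)) (c : Bool) (h : InvQ s) : InvQ (sbStep s c) := by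
  cases c
  · rw [sbStep_false]; unfold InvQ at *; simp only; ring_nf; ring_nf at h; nlinarith [h]
  · rw [sbStep_true]; unfold InvQ at *; simp only; ring_nf; ring_nf at h; nlinarith [h]

lemma invQ_pos {s : (ℕ × ℕ) × (ℕ × ℕ)} (h : InvQ s) : 0 < s.1.2 ∧ 0 < s.2.1 := by
  unfold InvQ at h
  constructor
  · rcases Nat.eq_zero_or_pos s.1.2 with h0 | h0
    · simp [h0] at h
    · exact h0
  · rcases Nat.eq_zero_or_pos s.2.1 with h0 | h0
    · simp [h0] at h
    · exact h0

/-- The mediant of a state. -/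
def medQ (s : (ℕ × ℕ) × (ℕ × ℕ)) : ℕ × ℕ := (s.1.1 + s.2.1, s.1.2 + s.2.2)

lemma ltQ_L_med {s : (ℕ × ℕ) × (ℕ × ℕ)} (h : InvQ s) : ltQ s.1 (medQ s) := by
  unfold InvQ at h; unfold ltQ medQ; simp only; nlinarith [h]

lemma ltQ_med_R {s : (ℕ × ℕ) × (ℕ × ℕ)} (h : InvQ s) : ltQ (medQ s) s.2 := by
  unfold InvQ at h; unfold ltQ medQ; simp only; nlinarith [h]

lemma medQ_wt_pos {s : (ℕ × ℕ) × (ℕ × ℕ)} (h : InvQ s) : 0 < (medQ s).1 + (medQ s).2 := by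
  have := invQ_pos h
  unfold medQ; simp only; omega

lemma qsub : ∀ (u : List Bool) (s : (ℕ × ℕ) × (ℕ × ℕ)), InvQ s →
    leQ s.1 (List.foldl sbStep s u).1 ∧ leQ (List.foldl sbStep s u).2 s.2 ∧
      InvQ (List.foldl sbStep s u) := by
  intro u
  induction u with
  | nil => intro s h; exact ⟨leQ_refl _, leQ_refl _, h⟩
  | cons c u ih =>
    intro s h
    have h' := invQ_step s c h
    obtain ⟨h1, h2, h3⟩ := ih (sbStep s c) h'
    have hpos := invQ_pos h
    have hpos' := invQ_pos h'
    have hposf := invQ_pos h3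
    refine ⟨?_, ?_, by simpa using h3⟩
    · cases c
    -- false : first bound unchanged
      · simpa [sbStep_false] using h1
      · -- true : s.1 ≤ med ≤ L'
        have hm : leQ s.1 (sbStep s true).1 := by
          have := ltQ_L_med h
          simpa [sbStep_true, medQ] using (leQ_of_ltQ this)
        refine leQ_trans' ?_ hm (by simpa using h1)
        simp [sbStep_true]
        omega
    · cases c
      · -- false : R' ≤ med ≤ s.2
        have hm : leQ (sbStep s false).2 s.2 := by
          have := ltQ_med_R h
          simpa [sbStep_false, medQ] using (leQ_of_ltQ this)
        refine leQ_trans' ?_ (by simpa using h2) hm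
        simp [sbStep_false]
        omega
      · simpa [sbStep_true] using h2

lemma invQ_root : InvQ ((0, 1), (1, 0)) := by unfold InvQ; simp

lemma sbBounds_append (w u : List Bool) :
    sbBounds (w ++ u) = List.foldl sbStep (sbBounds w) u := by
  unfold sbBounds; rw [List.foldl_append]

lemma invQ_w (w : List Bool) : InvQ (sbBounds w) := (qsub w _ invQ_root).2.2

lemma stBr_eq_med (w : List Bool) : stBr w = medQ (sbBounds w) := rfl

lemma stBr_wt_pos (w : List Bool) : 0 < (stBr w).1 + (stBr w).2 := by
  rw [stBr_eq_med]; exact medQ_wt_pos (invQ_w w)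

lemma q_left (w t : List Bool) : ltQ (stBr (w ++ false :: t)) (stBr w) := by
  have h' : InvQ (sbStep (sbBounds w) false) := invQ_step _ _ (invQ_w w)
  obtain ⟨h1, h2, h3⟩ := qsub t (sbStep (sbBounds w) false) h'
  have hfold : sbBounds (w ++ false :: t) = List.foldl sbStep (sbStep (sbBounds w) false) t := by
    rw [sbBounds_append]; rfl
  have hmed : ltQ (stBr (w ++ false :: t)) (List.foldl sbStep (sbStep (sbBounds w) false) t).2 := by
    rw [stBr_eq_med, hfold]; exact ltQ_med_R h3
  have hR : (sbStep (sbBounds w) false).2 = stBr w := by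
    rw [sbStep_false, stBr_eq_med]; rfl
  refine ltQ_of_ltQ_of_leQ (stBr_wt_pos w) hmed ?_
  rw [← hR]; exact h2

lemma q_right (w t : List Bool) : ltQ (stBr w) (stBr (w ++ true :: t)) := by
  have h' : InvQ (sbStep (sbBounds w) true) := invQ_step _ _ (invQ_w w)
  obtain ⟨h1, h2, h3⟩ := qsub t (sbStep (sbBounds w) true) h'
  have hfold : sbBounds (w ++ true :: t) = List.foldl sbStep (sbStep (sbBounds w) true) t := by
    rw [sbBounds_append]; rfl
  have hmed : ltQ (List.foldl sbStep (sbStep (sbBounds w) true) t).1 (stBr (w ++ true :: t)) := by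
    rw [stBr_eq_med, hfold]; exact ltQ_L_med h3
  have hL : (sbStep (sbBounds w) true).1 = stBr w := by
    rw [sbStep_true, stBr_eq_med]; rfl
  refine ltQ_of_leQ_of_ltQ (stBr_wt_pos w) ?_ hmed
  rw [← hL]; exact h1

lemma q_ghost_left (w : List Bool) : ltQ (0, 1) (stBr w) := by
  obtain ⟨h1, h2, h3⟩ := qsub w _ invQ_root
  have : ltQ (sbBounds w).1 (stBr w) := by rw [stBr_eq_med]; exact ltQ_L_med (invQ_w w)
  exact ltQ_of_leQ_of_ltQ (by norm_num) h1 this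

lemma q_ghost_right (w : List Bool) : ltQ (stBr w) (1, 0) := by
  obtain ⟨h1, h2, h3⟩ := qsub w _ invQ_root
  have : ltQ (stBr w) (sbBounds w).2 := by rw [stBr_eq_med]; exact ltQ_med_R (invQ_w w)
  exact ltQ_of_ltQ_of_leQ (by norm_num) this h2

lemma q_branch (p s t : List Bool) :
    ltQ (stBr (p ++ false :: s)) (stBr (p ++ true :: t)) :=
  ltQ_of_ltQ_of_leQ (stBr_wt_pos _) (q_left p s) (leQ_of_ltQ (q_right p t))

end Aux

section AuxW

/-! #### The word invariant and subtree lemma -/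

/-- Invariant of a word state. -/
def InvW (s : List Bool × List Bool) : Prop :=
  WordLt (s.1 ++ s.2) s.2 ∧ s.1 ≠ [] ∧ s.2 ≠ []

lemma wStep_false (s : List Bool × List Bool) : wStep s false = (s.1, s.1 ++ s.2) := rfl

lemma wStep_true (s : List Bool × List Bool) : wStep s true = (s.1 ++ s.2, s.2) := rfl

lemma invW_step (s : List Bool × List Bool) (c : Bool) (h : InvW s) : InvW (wStep s c) := by
  obtain ⟨h1, h2, h3⟩ := h
  cases c
  · rw [wStep_false]
    refine ⟨?_, h2, by simp [h2]⟩
    simpa using wlt_append_left s.1 h1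
  · rw [wStep_true]
    refine ⟨?_, by simp [h2], h3⟩
    exact wlt_append s.2 h1 (by simp)

lemma wsub : ∀ (u : List Bool) (s : List Bool × List Bool), InvW s →
    s.1 <+: (List.foldl wStep s u).1 ∧
      WordLt ((List.foldl wStep s u).1 ++ (List.foldl wStep s u).2) s.2 ∧
      InvW (List.foldl wStep s u) := by
  intro u
  induction u with
  | nil => intro s h; exact ⟨List.prefix_refl _, h.1, h⟩
  | cons c u ih =>
    intro s h
    have h' := invW_step s c h
    obtain ⟨h1, h2, h3⟩ := ih (wStep s c) h'
    refine ⟨?_, ?_, by simpa using h3⟩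
    · cases c
      · simpa [wStep_false] using h1
      · refine List.IsPrefix.trans (List.prefix_append s.1 s.2) ?_
        simpa [wStep_true] using h1
    · cases c
      · -- after a false step the new right bound is s.1 ++ s.2
        have h2' : WordLt ((List.foldl wStep (wStep s false) u).1 ++
            (List.foldl wStep (wStep s false) u).2) (s.1 ++ s.2) := by
          simpa [wStep_false] using h2
        exact wlt_trans (by simpa using h2') h.1
      · simpa [wStep_true] using h2

lemma invW_root : InvW ([false], [true]) := by
  refine ⟨List.Lex.rel (by decide), by simp, by simp⟩

lemma wBounds_append (w u : List Bool) :
    wBounds (w ++ u) = List.foldl wStep (wBounds w) u := by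
  unfold wBounds; rw [List.foldl_append]

lemma invW_w (w : List Bool) : InvW (wBounds w) := (wsub w _ invW_root).2.2

lemma gammaWord_eq (w : List Bool) : gammaWord w = (wBounds w).1 ++ (wBounds w).2 := rfl

lemma w_left (w t : List Bool) : WordLt (gammaWord (w ++ false :: t)) (gammaWord w) := by
  have h' : InvW (wStep (wBounds w) false) := invW_step _ _ (invW_w w)
  obtain ⟨h1, h2, h3⟩ := wsub t (wStep (wBounds w) false) h'
  have hfold : wBounds (w ++ false :: t) = List.foldl wStep (wStep (wBounds w) false) t := by
    rw [wBounds_append]; rfl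
  rw [gammaWord_eq, hfold]
  have : (wStep (wBounds w) false).2 = gammaWord w := by rw [wStep_false, gammaWord_eq]
  rw [← this]; exact h2

lemma w_right (w t : List Bool) : WordLt (gammaWord w) (gammaWord (w ++ true :: t)) := by
  have h' : InvW (wStep (wBounds w) true) := invW_step _ _ (invW_w w)
  obtain ⟨h1, h2, h3⟩ := wsub t (wStep (wBounds w) true) h'
  have hfold : wBounds (w ++ true :: t) = List.foldl wStep (wStep (wBounds w) true) t := by
    rw [wBounds_append]; rfl
  have hpre : gammaWord w <+: (List.foldl wStep (wStep (wBounds w) true) t).1 := by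
    rw [gammaWord_eq]
    simpa [wStep_true] using h1
  have hpre2 : gammaWord w <+: gammaWord (w ++ true :: t) := by
    rw [gammaWord_eq (w ++ true :: t), hfold]
    exact hpre.trans (List.prefix_append _ _)
  refine wlt_of_prefix hpre2 ?_
  have hr : (List.foldl wStep (wStep (wBounds w) true) t).2 ≠ [] := h3.2.2
  have hlen := hpre.length_le
  rw [gammaWord_eq (w ++ true :: t), hfold, List.length_append]
  have : 0 < (List.foldl wStep (wStep (wBounds w) true) t).2.length :=
    List.length_pos_iff.mpr hr
  omega

lemma w_ghost_left (w : List Bool) : WordLt [false] (gammaWord w) := by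
  obtain ⟨h1, h2, h3⟩ := wsub w _ invW_root
  have hpre : [false] <+: gammaWord w := by
    rw [gammaWord_eq]
    exact (show [false] <+: (wBounds w).1 from h1).trans (List.prefix_append _ _)
  refine wlt_of_prefix hpre ?_
  have h4 := (invW_w w).2.1
  have h5 := (invW_w w).2.2
  rw [gammaWord_eq, List.length_append]
  have := List.length_pos_iff.mpr h4
  have := List.length_pos_iff.mpr h5
  simp only [List.length_cons, List.length_nil]
  omega

lemma w_ghost_right (w : List Bool) : WordLt (gammaWord w) [true] := by
  obtain ⟨h1, h2, h3⟩ := wsub w _ invW_root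
  rw [gammaWord_eq]
  exact h2

lemma w_branch (p s t : List Bool) :
    WordLt (gammaWord (p ++ false :: s)) (gammaWord (p ++ true :: t)) :=
  wlt_trans (w_left p s) (w_right p t)

/-! #### Longest-common-prefix decomposition -/

lemma lcp_decomp : ∀ (u v : List Bool),
    u = v ∨ (∃ t, v = u ++ true :: t) ∨ (∃ t, v = u ++ false :: t) ∨
    (∃ t, u = v ++ true :: t) ∨ (∃ t, u = v ++ false :: t) ∨
    (∃ p s t, u = p ++ false :: s ∧ v = p ++ true :: t) ∨
    (∃ p s t, u = p ++ true :: s ∧ v = p ++ false :: t) := by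
  intro u
  induction u with
  | nil =>
    intro v
    cases v with
    | nil => exact Or.inl rfl
    | cons c t =>
      cases c
      · exact Or.inr (Or.inr (Or.inl ⟨t, rfl⟩))
      · exact Or.inr (Or.inl ⟨t, rfl⟩)
  | cons a u ih =>
    intro v
    cases v with
    | nil =>
      cases a
      · exact Or.inr (Or.inr (Or.inr (Or.inr (Or.inl ⟨u, rfl⟩))))
      · exact Or.inr (Or.inr (Or.inr (Or.inl ⟨u, rfl⟩)))
    | cons b v =>
      by_cases hab : a = b
      · subst hab
        rcases ih v with h | ⟨t, h⟩ | ⟨t, h⟩ | ⟨t, h⟩ | ⟨t, h⟩ |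
          ⟨p, s, t, h1, h2⟩ | ⟨p, s, t, h1, h2⟩
        · exact Or.inl (by rw [h])
        · exact Or.inr (Or.inl ⟨t, by rw [h]; rfl⟩)
        · exact Or.inr (Or.inr (Or.inl ⟨t, by rw [h]; rfl⟩))
        · exact Or.inr (Or.inr (Or.inr (Or.inl ⟨t, by rw [h]; rfl⟩)))
        · exact Or.inr (Or.inr (Or.inr (Or.inr (Or.inl ⟨t, by rw [h]; rfl⟩))))
        · exact Or.inr (Or.inr (Or.inr (Or.inr (Or.inr (Or.inl
            ⟨a :: p, s, t, by rw [h1]; rfl, by rw [h2]; rfl⟩)))))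
        · exact Or.inr (Or.inr (Or.inr (Or.inr (Or.inr (Or.inr
            ⟨a :: p, s, t, by rw [h1]; rfl, by rw [h2]; rfl⟩)))))
      · cases a <;> cases b
        · exact absurd rfl hab
        · exact Or.inr (Or.inr (Or.inr (Or.inr (Or.inr (Or.inl ⟨[], u, v, rfl, rfl⟩)))))
        · exact Or.inr (Or.inr (Or.inr (Or.inr (Or.inr (Or.inr ⟨[], u, v, rfl, rfl⟩)))))
        · exact absurd rfl hab

end AuxW

lemma ltQ_irrefl (p : ℕ × ℕ) : ¬ ltQ p p := by unfold ltQ; omega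

lemma main_paths (u v : List Bool) :
    WordLt (gammaWord u) (gammaWord v) ↔ ltQ (stBr u) (stBr v) := by
  rcases lcp_decomp u v with h | ⟨t, h⟩ | ⟨t, h⟩ | ⟨t, h⟩ | ⟨t, h⟩ |
    ⟨p, s, t, h1, h2⟩ | ⟨p, s, t, h1, h2⟩
  · subst h; exact iff_of_false (wlt_irrefl _) (ltQ_irrefl _)
  · subst h; exact iff_of_true (w_right u t) (q_right u t)
  · subst h
    exact iff_of_false (fun hw => wlt_asymm hw (w_left u t))
      (fun hq => ltQ_asymm hq (q_left u t))
  · subst h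
    exact iff_of_false (fun hw => wlt_asymm hw (w_right v t))
      (fun hq => ltQ_asymm hq (q_right v t))
  · subst h; exact iff_of_true (w_left v t) (q_left v t)
  · subst h1; subst h2; exact iff_of_true (w_branch p s t) (q_branch p s t)
  · subst h1; subst h2
    exact iff_of_false (fun hw => wlt_asymm hw (w_branch p t s))
      (fun hq => ltQ_asymm hq (q_branch p t s))


/-- For any two elements `x, y` of the set of all paths together with the
ghosts `∂ℓ` and `∂r`, `γ(x)` is lexicographically smaller than `γ(y)` if and
only if `pair(x) <_Q pair(y)`. -/
theorem gammaBar_lt_iff_ltQ (x y : NodeBar) :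
    WordLt (gammaBar x) (gammaBar y) ↔ ltQ (pairBar x) (pairBar y) := by
  cases x with
  | inl bx =>
    cases y with
    | inl by_ =>
      cases bx <;> cases by_
      · exact iff_of_false (wlt_irrefl _) (ltQ_irrefl _)
      · exact iff_of_true (List.Lex.rel (by decide)) (by norm_num [ltQ, pairBar])
      · exact iff_of_false (fun hw => wlt_asymm hw (List.Lex.rel (by decide)))
          (by norm_num [ltQ, pairBar])
      · exact iff_of_false (wlt_irrefl _) (ltQ_irrefl _)
    | inr w =>
      cases bx
      · exact iff_of_true (w_ghost_left w) (q_ghost_left w)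
      · exact iff_of_false (fun hw => wlt_asymm hw (w_ghost_right w))
          (fun hq => ltQ_asymm hq (q_ghost_right w))
  | inr u =>
    cases y with
    | inl by_ =>
      cases by_
      · exact iff_of_false (fun hw => wlt_asymm hw (w_ghost_left u))
          (fun hq => ltQ_asymm hq (q_ghost_left u))
      · exact iff_of_true (w_ghost_right u) (q_ghost_right u)
    | inr v => exact main_paths u v
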